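/- If s ↦ L(s) satisfies H1–H4, then there exists a constant C^P, depending only on c^P, such that for any T ≥ 1 and k ≤ T, ‖L_{k,T} L_{k−1,T}⋯L_{1,T} − L^P_{k,T} L^P_{k−1,T}⋯L^P_{1,T} P₀ − L^Q_{k,T} L^Q_{k−1,T}⋯L^Q_{1,T} Q₀‖ ≤ C^P/(T(1−ℓ)), where L^P_{k,T} = L_{k,T} P_{k,T} and L^Q_{k,T} = L_{k,T} Q_{k,T}. Moreover, ‖L^Q_{k,T} L^Q_{k−1,T}⋯L^Q_{1,T} Q₀‖ ≤ 2ℓ^k. -/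

import Mathlib

open Matrix Finset Set
open scoped Kronecker ComplexOrder ENNReal

namespace RISPaper

variable {nS nE N : Type*}

/-- Partial trace over the second (environment) factor. -/
noncomputable def ptraceE [Fintype nE] (A : Matrix (nS × nE) (nS × nE) ℂ) :
    Matrix nS nS ℂ := Matrix.of fun i j => ∑ k : nE, A (i, k) (j, k)

/-- Partial trace over the first (system) factor. -/
noncomputable def ptraceS [Fintype nS] (A : Matrix (nS × nE) (nS × nE) ℂ) :
    Matrix nE nE ℂ := Matrix.of fun i j => ∑ k : nS, A (k, i) (k, j)

/-- Logarithm of a Hermitian matrix, via the spectral decomposition (junk value `0`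
on non-Hermitian matrices; eigenvalue `0` contributes `Real.log 0 = 0`). -/
noncomputable def hlog [Fintype N] [DecidableEq N] (A : Matrix N N ℂ) : Matrix N N ℂ :=
  if hA : A.IsHermitian then
    (hA.eigenvectorUnitary : Matrix N N ℂ) *
      Matrix.diagonal (fun i => (Real.log (hA.eigenvalues i) : ℂ)) *
      (star (hA.eigenvectorUnitary : Matrix N N ℂ))
  else 0

/-- von Neumann entropy `S(η) = -Tr (η log η)`. -/
noncomputable def vnEntropy [Fintype N] [DecidableEq N] (A : Matrix N N ℂ) : ℝ :=
  (-(A * hlog A).trace).re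

/-- Relative entropy `S(η|ν) = Tr (η (log η - log ν))`. -/
noncomputable def relEntropy [Fintype N] [DecidableEq N] (A B : Matrix N N ℂ) : ℝ :=
  ((A * (hlog A - hlog B)).trace).re

/-- Gibbs state `exp(-βh)/Tr(exp(-βh))`. -/
noncomputable def gibbs [Fintype N] [DecidableEq N] (β : ℝ) (h : Matrix N N ℂ) : Matrix N N ℂ :=
  (NormedSpace.exp ((-β : ℂ) • h)).trace⁻¹ • NormedSpace.exp ((-β : ℂ) • h)

/-- A state: positive semidefinite with unit trace. -/
def IsState [Fintype N] (ρ : Matrix N N ℂ) : Prop := ρ.PosSemidef ∧ ρ.trace = 1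

/-- A faithful state: positive definite with unit trace. -/
def IsFaithfulState [Fintype N] (ρ : Matrix N N ℂ) : Prop := ρ.PosDef ∧ ρ.trace = 1

/-- Trace norm `‖A‖₁ = Tr √(AᴴA)`. -/
noncomputable def traceNorm [Fintype N] [DecidableEq N] (A : Matrix N N ℂ) : ℝ :=
  ((Matrix.posSemidef_conjTranspose_mul_self A).1.eigenvectorUnitary.1 *
    Matrix.diagonal (((↑) : ℝ → ℂ) ∘ (Real.sqrt ∘ (Matrix.posSemidef_conjTranspose_mul_self A).1.eigenvalues)) *
    (star (Matrix.posSemidef_conjTranspose_mul_self A).1.eigenvectorUnitary : Matrix N N ℂ)).trace.re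

/-- Operator (ℓ²→ℓ²) norm of a matrix. -/
noncomputable def opNorm [Fintype N] [DecidableEq N] (A : Matrix N N ℂ) : ℝ :=
  ‖LinearMap.toContinuousLinearMap (Matrix.toEuclideanLin A)‖

/-- Operator norm of a map on matrices, with respect to the trace norm. -/
noncomputable def mapTNorm [Fintype N] [DecidableEq N]
    (f : Matrix N N ℂ → Matrix N N ℂ) : ℝ :=
  sSup ((fun A => traceNorm (f A)) '' {A | traceNorm A ≤ 1})

/-- The smallest point of the spectrum of a Hermitian matrix (junk value `0` otherwise). -/
noncomputable def infSpec [Fintype N] [DecidableEq N] [Nonempty N] (A : Matrix N N ℂ) : ℝ :=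
  if hA : A.IsHermitian then ⨅ i, hA.eigenvalues i else 0

/-- Amplification `Φ ⊗ id_k` of a map on matrices. -/
noncomputable def amp [Fintype N] (Φ : Matrix N N ℂ → Matrix N N ℂ) (k : ℕ)
    (M : Matrix (N × Fin k) (N × Fin k) ℂ) : Matrix (N × Fin k) (N × Fin k) ℂ :=
  Matrix.of fun p q => Φ (Matrix.of fun i j => M (i, p.2) (j, q.2)) p.1 q.1

/-- Complete positivity. -/
def IsCompletelyPositive [Fintype N] (Φ : Matrix N N ℂ → Matrix N N ℂ) : Prop :=
  ∀ (k : ℕ) (M : Matrix (N × Fin k) (N × Fin k) ℂ), M.PosSemidef → (amp Φ k M).PosSemidef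

/-- Trace preservation. -/
def IsTracePreserving [Fintype N] (Φ : Matrix N N ℂ → Matrix N N ℂ) : Prop :=
  ∀ A, (Φ A).trace = A.trace

/-- CPTP (quantum channel). -/
def IsCPTP [Fintype N] (Φ : Matrix N N ℂ → Matrix N N ℂ) : Prop :=
  IsCompletelyPositive Φ ∧ IsTracePreserving Φ

/-- Irreducibility of a map on matrices: the only invariant hereditary subalgebras are
trivial. -/
def IsIrreducible [Fintype N] [DecidableEq N] (Φ : Matrix N N ℂ → Matrix N N ℂ) : Prop :=
  ∀ p : Matrix N N ℂ, p.IsHermitian → p * p = p →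
    (∀ A, Φ (p * A * p) = p * Φ (p * A * p) * p) → p = 0 ∨ p = 1

/-- The divided-difference kernel entering the Hessian of relative entropy. -/
noncomputable def ddKernel (x y : ℝ) : ℝ :=
  if x = y then 1 / (2 * x) else (Real.log x - Real.log y) / (2 * (x - y))

/-- The quadratic form `F_η(A,B)` of the paper (second-order expansion of relative entropy
around the faithful state `η`), written via the eigendecomposition of `η`. -/
noncomputable def Fq [Fintype N] [DecidableEq N] (η A B : Matrix N N ℂ) : ℝ :=
  if hη : η.IsHermitian then
    (∑ a : N, ∑ b : N,
      (ddKernel (hη.eigenvalues a) (hη.eigenvalues b) : ℂ) *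
        ((star (hη.eigenvectorUnitary : Matrix N N ℂ) * A *
            (hη.eigenvectorUnitary : Matrix N N ℂ)) b a *
         (star (hη.eigenvectorUnitary : Matrix N N ℂ) * B *
            (hη.eigenvectorUnitary : Matrix N N ℂ)) a b)).re
  else 0

/-- Ordered product `f k * f (k-1) * ⋯ * f 1` (equal to `1` for `k = 0`). -/
noncomputable def opProd {α : Type*} [Monoid α] (f : ℕ → α) : ℕ → α
  | 0 => 1
  | k + 1 => f (k + 1) * opProd f k

/-- `P` is the spectral projection of `L` associated with the peripheral part of the
spectrum (eigenvalues of modulus one). -/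
def IsPeripheralProj {X : Type*} [NormedAddCommGroup X] [NormedSpace ℂ X]
    (L P : X →L[ℂ] X) : Prop :=
  P * P = P ∧ L * P = P * L ∧
    (LinearMap.range (P : X →ₗ[ℂ] X) =
      ⨆ z ∈ {z : ℂ | ‖z‖ = 1}, Module.End.maxGenEigenspace (L : X →ₗ[ℂ] X) z) ∧
    (LinearMap.ker (P : X →ₗ[ℂ] X) =
      ⨆ z ∈ {z : ℂ | ‖z‖ ≠ 1}, Module.End.maxGenEigenspace (L : X →ₗ[ℂ] X) z)

/-- `P` is the spectral projection of `L` associated with the eigenvalue `z`. -/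
def IsSpectralProjAt {X : Type*} [NormedAddCommGroup X] [NormedSpace ℂ X]
    (L P : X →L[ℂ] X) (z : ℂ) : Prop :=
  P * P = P ∧ L * P = P * L ∧
    (LinearMap.range (P : X →ₗ[ℂ] X) =
      Module.End.maxGenEigenspace (L : X →ₗ[ℂ] X) z) ∧
    (LinearMap.ker (P : X →ₗ[ℂ] X) =
      ⨆ w ∈ {w : ℂ | w ≠ z}, Module.End.maxGenEigenspace (L : X →ₗ[ℂ] X) w)



/-! ### Auxiliary material for `contracting_part_elimination` -/

section RingIdsAux
variable {R : Type*} [Ring R] (a p P A B C : R)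

private lemma ring_I0 (hB : P * B = B) : (a * p) * B = a * ((p - P) * B) + a * B := by
  rw [mul_assoc, ← mul_add, sub_mul, hB, sub_add_cancel]

private lemma ring_I1 (hp : p * p = p) (hP : P * P = P) (hc : a * p = p * a)
    (hB : P * B = B) :
    (1 - p) * (a * A - (a * p) * B - (a * (1 - p)) * C) =
      (a * (1 - p)) * ((P - p) * (P * (A - B - C))) +
      (a * (1 - p)) * ((1 - P) * (A - B - C)) +
      (a * (1 - p)) * ((P - p) * B) := by
  have hpp : ∀ x : R, p * (p * x) = p * x := fun x => by rw [← mul_assoc, hp]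
  have hPP : ∀ x : R, P * (P * x) = P * x := fun x => by rw [← mul_assoc, hP]
  have hap : ∀ x : R, a * (p * x) = p * (a * x) := fun x => by
    rw [← mul_assoc, hc, mul_assoc]
  simp only [mul_sub, sub_mul, mul_add, add_mul, mul_one, one_mul, mul_assoc]
  simp only [hpp, hPP, hap, hp, hP, hc, hB]
  abel

private lemma ring_I2 (hp : p * p = p) (hP : P * P = P) (hc : a * p = p * a)
    (hC : (1 - P) * C = C) :
    p * (a * A - (a * p) * B - (a * (1 - p)) * C) =
      a * ((p - P) * (P * (A - B - C))) + a * (P * (A - B - C)) +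
      a * ((p - P) * ((1 - P) * (A - B - C))) + a * ((p - P) * C) := by
  have hpp : ∀ x : R, p * (p * x) = p * x := fun x => by rw [← mul_assoc, hp]
  have hPP : ∀ x : R, P * (P * x) = P * x := fun x => by rw [← mul_assoc, hP]
  have hap : ∀ x : R, a * (p * x) = p * (a * x) := fun x => by
    rw [← mul_assoc, hc, mul_assoc]
  have hPC : P * C = 0 := by
    have h : P * C = C - (1 - P) * C := by
      rw [sub_mul, one_mul, sub_sub_cancel]
    rw [h, hC, sub_self]
  have hPC' : ∀ x : R, P * (C * x) = 0 := fun x => by rw [← mul_assoc, hPC, zero_mul]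
  simp only [mul_sub, sub_mul, mul_add, add_mul, mul_one, one_mul, mul_assoc]
  simp only [hpp, hPP, hap, hp, hP, hc, hPC, hPC', mul_zero, zero_mul, sub_zero, zero_sub,
    add_zero, zero_add]
  abel

private lemma ring_pinv (hp : p * p = p) (hc : a * p = p * a) :
    p * ((a * p) * B) = (a * p) * B := by
  rw [← mul_assoc, ← mul_assoc, hc, mul_assoc p a p, ← hc, ← mul_assoc, ← hc,
    mul_assoc a p p, hp]

private lemma ring_qinv (hp : p * p = p) (hc : a * p = p * a) :
    (1 - p) * ((a * (1 - p)) * C) = (a * (1 - p)) * C := by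
  have hq : (1 - p) * a = a * (1 - p) := by rw [sub_mul, one_mul, mul_sub, mul_one, hc]
  have hqq : (1 - p) * (1 - p) = 1 - p := by
    rw [mul_sub, mul_one, sub_mul, one_mul, hp]; abel
  rw [← mul_assoc, ← mul_assoc, hq, mul_assoc a (1-p) (1-p), hqq]
end RingIdsAux

private lemma mygeom_le {l : ℝ} (hl0 : 0 ≤ l) (hl1 : l < 1) (k : ℕ) :
    (∑ m ∈ Finset.range k, l ^ m) ≤ (1 - l)⁻¹ := by
  have h1l : 0 < 1 - l := by linarith
  rw [inv_eq_one_div, le_div_iff₀ h1l]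
  have h := geom_sum_mul l k
  have hk : 0 ≤ l ^ k := pow_nonneg hl0 k
  nlinarith [h]

set_option maxHeartbeats 1000000 in
private lemma abstract_elim {X : Type*} [NormedAddCommGroup X] [NormedSpace ℂ X]
    [Nontrivial X]
    (LL PP : ℕ → (X →L[ℂ] X)) (T : ℕ) (hT : 1 ≤ T) (l c₁ : ℝ)
    (hl0 : 0 ≤ l) (hl1 : l < 1) (hc₁ : 0 ≤ c₁)
    (hL : ∀ i ≤ T, ‖LL i‖ ≤ 1)
    (hPid : ∀ i ≤ T, PP i * PP i = PP i)
    (hPcomm : ∀ i ≤ T, LL i * PP i = PP i * LL i)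
    (hPn : ∀ i ≤ T, ‖PP i‖ ≤ 1)
    (hQn : ∀ i ≤ T, ‖LL i * (1 - PP i)‖ ≤ l)
    (hLip : ∀ i, i + 1 ≤ T → ‖PP (i+1) - PP i‖ ≤ c₁ / T) :
    ∀ k ≤ T,
      ‖opProd LL k - opProd (fun i => LL i * PP i) k * PP 0 -
        opProd (fun i => LL i * (1 - PP i)) k * (1 - PP 0)‖ ≤
        (Real.exp c₁ * c₁ * (c₁ * (3 + 2 * Real.exp c₁) + 2) + c₁ * (3 + 2 * Real.exp c₁) + 1)
          / ((T : ℝ) * (1 - l)) ∧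
      ‖opProd (fun i => LL i * (1 - PP i)) k * (1 - PP 0)‖ ≤ 2 * l ^ k := by
  have hT0 : (0 : ℝ) < T := by exact_mod_cast Nat.lt_of_lt_of_le Nat.zero_lt_one hT
  have h1l : 0 < 1 - l := by linarith
  set E₁ : ℝ := Real.exp c₁ with hE₁def
  have hE₁ : 1 ≤ E₁ := Real.one_le_exp hc₁
  set c₄ : ℝ := c₁ * (3 + 2 * E₁) with hc₄def
  have hc₄0 : 0 ≤ c₄ := by positivity
  set δ : ℝ := ((T : ℝ) * (1 - l))⁻¹ with hδdef
  have hδ0 : 0 < δ := by positivity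
  set u : ℝ := c₁ / T with hudef
  have hu0 : 0 ≤ u := by positivity
  set A : ℕ → (X →L[ℂ] X) := opProd LL with hAdef
  set B : ℕ → (X →L[ℂ] X) := fun k => opProd (fun i => LL i * PP i) k * PP 0 with hBdef
  set Cq : ℕ → (X →L[ℂ] X) := fun k => opProd (fun i => LL i * (1 - PP i)) k * (1 - PP 0)
    with hCdef
  set Ee : ℕ → (X →L[ℂ] X) := fun k => A k - B k - Cq k with hEdef
  have hA : ∀ k, A (k+1) = LL (k+1) * A k := fun k => rfl
  have hB : ∀ k, B (k+1) = (LL (k+1) * PP (k+1)) * B k := fun k => by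
    show opProd _ (k+1) * PP 0 = _
    rw [opProd, mul_assoc]
  have hC : ∀ k, Cq (k+1) = (LL (k+1) * (1 - PP (k+1))) * Cq k := fun k => by
    show opProd _ (k+1) * (1 - PP 0) = _
    rw [opProd, mul_assoc]
  -- ‖A k‖ ≤ 1
  have normA : ∀ k, k ≤ T → ‖A k‖ ≤ 1 := by
    intro k
    induction k with
    | zero => intro _; exact le_of_eq norm_one
    | succ n ih =>
      intro h
      have hn := ih (Nat.le_of_succ_le h)
      calc ‖A (n+1)‖ = ‖LL (n+1) * A n‖ := by rw [hA]
        _ ≤ ‖LL (n+1)‖ * ‖A n‖ := norm_mul_le _ _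
        _ ≤ 1 * 1 := mul_le_mul (hL _ h) hn (norm_nonneg _) zero_le_one
        _ = 1 := one_mul 1
  -- claim 1 : P-invariance and norm of B
  have claim1 : ∀ k, k ≤ T → PP k * B k = B k ∧ ‖B k‖ ≤ (1 + u) ^ k := by
    intro k
    induction k with
    | zero =>
      intro _
      have hB0 : B 0 = PP 0 := by
        show opProd _ 0 * PP 0 = PP 0
        rw [opProd, one_mul]
      constructor
      · rw [hB0]; exact hPid 0 (Nat.zero_le T)
      · rw [hB0, pow_zero]; exact hPn 0 (Nat.zero_le T)
    | succ n ih =>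
      intro h
      have hn := ih (Nat.le_of_succ_le h)
      constructor
      · rw [hB n]
        exact ring_pinv _ _ _ (hPid _ h) (hPcomm _ h)
      · have key : B (n+1) = LL (n+1) * ((PP (n+1) - PP n) * B n) + LL (n+1) * B n := by
          rw [hB n]
          exact ring_I0 _ _ _ _ hn.1
        have hBn0 : 0 ≤ ‖B n‖ := norm_nonneg _
        have h1 : ‖LL (n+1) * ((PP (n+1) - PP n) * B n)‖ ≤ u * ‖B n‖ := by
          calc ‖LL (n+1) * ((PP (n+1) - PP n) * B n)‖
              ≤ ‖LL (n+1)‖ * ‖(PP (n+1) - PP n) * B n‖ := norm_mul_le _ _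
            _ ≤ 1 * (‖PP (n+1) - PP n‖ * ‖B n‖) :=
                mul_le_mul (hL _ h) (norm_mul_le _ _) (norm_nonneg _) zero_le_one
            _ = ‖PP (n+1) - PP n‖ * ‖B n‖ := one_mul _
            _ ≤ u * ‖B n‖ := mul_le_mul_of_nonneg_right (hLip n h) hBn0
        have h2 : ‖LL (n+1) * B n‖ ≤ ‖B n‖ := by
          calc ‖LL (n+1) * B n‖ ≤ ‖LL (n+1)‖ * ‖B n‖ := norm_mul_le _ _
            _ ≤ 1 * ‖B n‖ := mul_le_mul_of_nonneg_right (hL _ h) hBn0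
            _ = ‖B n‖ := one_mul _
        have hpow : (0:ℝ) ≤ (1+u)^n := by positivity
        calc ‖B (n+1)‖ ≤ ‖LL (n+1) * ((PP (n+1) - PP n) * B n)‖ + ‖LL (n+1) * B n‖ := by
              rw [key]; exact norm_add_le _ _
          _ ≤ u * ‖B n‖ + ‖B n‖ := add_le_add h1 h2
          _ = (1 + u) * ‖B n‖ := by ring
          _ ≤ (1 + u) * (1 + u)^n := by nlinarith [hn.2]
          _ = (1 + u)^(n+1) := by ring
  -- (1+u)^k ≤ E₁ for k ≤ T
  have hpowE : ∀ k, k ≤ T → (1 + u) ^ k ≤ E₁ := by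
    intro k hk
    have h1 : (1 + u) ^ k ≤ Real.exp u ^ k := by
      apply pow_le_pow_left₀ (by positivity)
      linarith [Real.add_one_le_exp u]
    have h2 : Real.exp u ^ k = Real.exp (k * u) := (Real.exp_nat_mul u k).symm
    have hkT : (k:ℝ) ≤ (T:ℝ) := by exact_mod_cast hk
    have h3 : (k : ℝ) * u ≤ c₁ := by
      rw [hudef]
      calc (k:ℝ) * (c₁ / T) ≤ (T:ℝ) * (c₁ / T) :=
            mul_le_mul_of_nonneg_right hkT (by positivity)
        _ = c₁ := by field_simp
    calc (1 + u) ^ k ≤ Real.exp u ^ k := h1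
      _ = Real.exp ((k:ℝ) * u) := h2
      _ ≤ Real.exp c₁ := Real.exp_le_exp.mpr h3
  have normB : ∀ k, k ≤ T → ‖B k‖ ≤ E₁ := fun k hk => (claim1 k hk).2.trans (hpowE k hk)
  -- claim 2 : Q-invariance and norm of C
  have claim2 : ∀ k, k ≤ T → (1 - PP k) * Cq k = Cq k ∧ ‖Cq k‖ ≤ 2 * l ^ k := by
    intro k
    induction k with
    | zero =>
      intro _
      have hC0 : Cq 0 = 1 - PP 0 := by
        show opProd _ 0 * (1 - PP 0) = 1 - PP 0
        rw [opProd, one_mul]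
      constructor
      · rw [hC0, mul_sub, mul_one, sub_mul, one_mul, hPid 0 (Nat.zero_le T)]
        abel
      · rw [hC0, pow_zero, mul_one]
        calc ‖(1 : X →L[ℂ] X) - PP 0‖ ≤ ‖(1 : X →L[ℂ] X)‖ + ‖PP 0‖ := norm_sub_le _ _
          _ ≤ 1 + 1 := add_le_add (le_of_eq norm_one) (hPn 0 (Nat.zero_le T))
          _ = 2 := by norm_num
    | succ n ih =>
      intro h
      have hn := ih (Nat.le_of_succ_le h)
      constructor
      · rw [hC n]
        exact ring_qinv _ _ _ (hPid _ h) (hPcomm _ h)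
      · calc ‖Cq (n+1)‖ = ‖(LL (n+1) * (1 - PP (n+1))) * Cq n‖ := by rw [hC n]
          _ ≤ ‖LL (n+1) * (1 - PP (n+1))‖ * ‖Cq n‖ := norm_mul_le _ _
          _ ≤ l * (2 * l ^ n) := mul_le_mul (hQn _ h) hn.2 (norm_nonneg _) hl0
          _ = 2 * l ^ (n+1) := by ring
  -- trivial bound on the P-component
  have ftriv : ∀ k, k ≤ T → ‖PP k * Ee k‖ ≤ 3 + E₁ := by
    intro k hk
    have h1 : ‖Ee k‖ ≤ 1 + E₁ + 2 * l ^ k := by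
      calc ‖Ee k‖ = ‖A k - B k - Cq k‖ := rfl
        _ ≤ ‖A k - B k‖ + ‖Cq k‖ := norm_sub_le _ _
        _ ≤ ‖A k‖ + ‖B k‖ + ‖Cq k‖ :=
            add_le_add_left (norm_sub_le _ _) _
        _ ≤ 1 + E₁ + 2 * l ^ k :=
            add_le_add (add_le_add (normA k hk) (normB k hk)) (claim2 k hk).2
    have hlk : l ^ k ≤ 1 := pow_le_one₀ hl0 (le_of_lt hl1)
    calc ‖PP k * Ee k‖ ≤ ‖PP k‖ * ‖Ee k‖ := norm_mul_le _ _
      _ ≤ 1 * (1 + E₁ + 2 * l ^ k) := by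
          apply mul_le_mul (hPn k hk) h1 (norm_nonneg _) zero_le_one
      _ = 1 + E₁ + 2 * l ^ k := one_mul _
      _ ≤ 3 + E₁ := by linarith
  -- claim 3 : bound on the Q-component of the error
  have claim3 : ∀ k, k ≤ T → ‖(1 - PP k) * Ee k‖ ≤ c₄ * δ := by
    intro k
    induction k with
    | zero =>
      intro _
      have hE0 : Ee 0 = 0 := by
        show A 0 - B 0 - Cq 0 = 0
        show opProd LL 0 - opProd _ 0 * PP 0 - opProd _ 0 * (1 - PP 0) = 0
        rw [opProd, opProd, opProd, one_mul, one_mul]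
        abel
      rw [hE0, mul_zero, norm_zero]
      positivity
    | succ n ih =>
      intro h
      have hn := ih (Nat.le_of_succ_le h)
      have hnT := Nat.le_of_succ_le h
      have key : (1 - PP (n+1)) * Ee (n+1) =
          (LL (n+1) * (1 - PP (n+1))) * ((PP n - PP (n+1)) * (PP n * Ee n)) +
          (LL (n+1) * (1 - PP (n+1))) * ((1 - PP n) * Ee n) +
          (LL (n+1) * (1 - PP (n+1))) * ((PP n - PP (n+1)) * B n) := by
        show (1 - PP (n+1)) * (A (n+1) - B (n+1) - Cq (n+1)) = _
        rw [hA n, hB n, hC n]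
        exact ring_I1 _ _ _ _ _ _ (hPid _ h) (hPid _ hnT) (hPcomm _ h) (claim1 n hnT).1
      have hΔ : ‖PP n - PP (n+1)‖ ≤ u := by
        rw [norm_sub_rev]; exact hLip n h
      have haq : ‖LL (n+1) * (1 - PP (n+1))‖ ≤ l := hQn _ h
      have ht1 : ‖(LL (n+1) * (1 - PP (n+1))) * ((PP n - PP (n+1)) * (PP n * Ee n))‖ ≤
          l * (u * (3 + E₁)) := by
        calc ‖(LL (n+1) * (1 - PP (n+1))) * ((PP n - PP (n+1)) * (PP n * Ee n))‖
            ≤ ‖LL (n+1) * (1 - PP (n+1))‖ * ‖(PP n - PP (n+1)) * (PP n * Ee n)‖ :=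
              norm_mul_le _ _
          _ ≤ l * (u * (3 + E₁)) := by
              apply mul_le_mul haq _ (norm_nonneg _) hl0
              calc ‖(PP n - PP (n+1)) * (PP n * Ee n)‖
                  ≤ ‖PP n - PP (n+1)‖ * ‖PP n * Ee n‖ := norm_mul_le _ _
                _ ≤ u * (3 + E₁) := by
                    apply mul_le_mul hΔ (ftriv n hnT) (norm_nonneg _) hu0
      have ht2 : ‖(LL (n+1) * (1 - PP (n+1))) * ((1 - PP n) * Ee n)‖ ≤ l * (c₄ * δ) := by
        calc ‖(LL (n+1) * (1 - PP (n+1))) * ((1 - PP n) * Ee n)‖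
            ≤ ‖LL (n+1) * (1 - PP (n+1))‖ * ‖(1 - PP n) * Ee n‖ := norm_mul_le _ _
          _ ≤ l * (c₄ * δ) := mul_le_mul haq hn (norm_nonneg _) hl0
      have ht3 : ‖(LL (n+1) * (1 - PP (n+1))) * ((PP n - PP (n+1)) * B n)‖ ≤
          l * (u * E₁) := by
        calc ‖(LL (n+1) * (1 - PP (n+1))) * ((PP n - PP (n+1)) * B n)‖
            ≤ ‖LL (n+1) * (1 - PP (n+1))‖ * ‖(PP n - PP (n+1)) * B n‖ := norm_mul_le _ _
          _ ≤ l * (u * E₁) := by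
              apply mul_le_mul haq _ (norm_nonneg _) hl0
              calc ‖(PP n - PP (n+1)) * B n‖ ≤ ‖PP n - PP (n+1)‖ * ‖B n‖ := norm_mul_le _ _
                _ ≤ u * E₁ := mul_le_mul hΔ (normB n hnT) (norm_nonneg _) hu0
      have hkey2 : u * (3 + 2 * E₁) = c₄ * δ * (1 - l) := by
        rw [hudef, hc₄def, hδdef]
        field_simp
      calc ‖(1 - PP (n+1)) * Ee (n+1)‖
          ≤ ‖(LL (n+1) * (1 - PP (n+1))) * ((PP n - PP (n+1)) * (PP n * Ee n)) +
              (LL (n+1) * (1 - PP (n+1))) * ((1 - PP n) * Ee n)‖ +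
            ‖(LL (n+1) * (1 - PP (n+1))) * ((PP n - PP (n+1)) * B n)‖ := by
            rw [key]; exact norm_add_le _ _
        _ ≤ l * (u * (3 + E₁)) + l * (c₄ * δ) + l * (u * E₁) := by
            have := norm_add_le
              ((LL (n+1) * (1 - PP (n+1))) * ((PP n - PP (n+1)) * (PP n * Ee n)))
              ((LL (n+1) * (1 - PP (n+1))) * ((1 - PP n) * Ee n))
            linarith
        _ ≤ c₄ * δ := by
            have e1 : l * (u * (3 + E₁)) + l * (u * E₁) = l * (c₄ * δ * (1 - l)) := by
              rw [← hkey2]; ring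
            have e2 : c₄ * δ - l * (c₄ * δ * (1 - l)) - l * (c₄ * δ) =
                (c₄ * δ) * (1 - l) ^ 2 := by ring
            nlinarith [mul_nonneg (mul_nonneg hc₄0 hδ0.le) (sq_nonneg (1 - l))]
  -- claim 4 : bound on the P-component of the error
  have claim4 : ∀ k, k ≤ T → ‖PP k * Ee k‖ ≤
      (1 + u) ^ k * (u * ((k : ℝ) * (c₄ * δ) + 2 * ∑ m ∈ Finset.range k, l ^ m)) := by
    intro k
    induction k with
    | zero =>
      intro _
      have hE0 : Ee 0 = 0 := by
        show A 0 - B 0 - Cq 0 = 0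
        show opProd LL 0 - opProd _ 0 * PP 0 - opProd _ 0 * (1 - PP 0) = 0
        rw [opProd, opProd, opProd, one_mul, one_mul]
        abel
      rw [hE0, mul_zero, norm_zero]
      simp
    | succ n ih =>
      intro h
      have hn := ih (Nat.le_of_succ_le h)
      have hnT := Nat.le_of_succ_le h
      have key : PP (n+1) * Ee (n+1) =
          LL (n+1) * ((PP (n+1) - PP n) * (PP n * Ee n)) +
          LL (n+1) * (PP n * Ee n) +
          LL (n+1) * ((PP (n+1) - PP n) * ((1 - PP n) * Ee n)) +
          LL (n+1) * ((PP (n+1) - PP n) * Cq n) := by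
        show PP (n+1) * (A (n+1) - B (n+1) - Cq (n+1)) = _
        rw [hA n, hB n, hC n]
        exact ring_I2 _ _ _ _ _ _ (hPid _ h) (hPid _ hnT) (hPcomm _ h) (claim2 n hnT).1
      have hΔ : ‖PP (n+1) - PP n‖ ≤ u := hLip n h
      have hLn : ‖LL (n+1)‖ ≤ 1 := hL _ h
      have hmulLL : ∀ Z : X →L[ℂ] X, ‖LL (n+1) * Z‖ ≤ ‖Z‖ := by
        intro Z
        calc ‖LL (n+1) * Z‖ ≤ ‖LL (n+1)‖ * ‖Z‖ := norm_mul_le _ _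
          _ ≤ 1 * ‖Z‖ := mul_le_mul_of_nonneg_right hLn (norm_nonneg _)
          _ = ‖Z‖ := one_mul _
      set fn := ‖PP n * Ee n‖ with hfndef
      have hfn0 : 0 ≤ fn := norm_nonneg _
      have ht1 : ‖LL (n+1) * ((PP (n+1) - PP n) * (PP n * Ee n))‖ ≤ u * fn := by
        refine (hmulLL _).trans ?_
        calc ‖(PP (n+1) - PP n) * (PP n * Ee n)‖ ≤ ‖PP (n+1) - PP n‖ * fn := norm_mul_le _ _
          _ ≤ u * fn := mul_le_mul_of_nonneg_right hΔ hfn0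
      have ht2 : ‖LL (n+1) * (PP n * Ee n)‖ ≤ fn := hmulLL _
      have ht3 : ‖LL (n+1) * ((PP (n+1) - PP n) * ((1 - PP n) * Ee n))‖ ≤ u * (c₄ * δ) := by
        refine (hmulLL _).trans ?_
        calc ‖(PP (n+1) - PP n) * ((1 - PP n) * Ee n)‖
            ≤ ‖PP (n+1) - PP n‖ * ‖(1 - PP n) * Ee n‖ := norm_mul_le _ _
          _ ≤ u * (c₄ * δ) := mul_le_mul hΔ (claim3 n hnT) (norm_nonneg _) hu0
      have ht4 : ‖LL (n+1) * ((PP (n+1) - PP n) * Cq n)‖ ≤ u * (2 * l ^ n) := by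
        refine (hmulLL _).trans ?_
        calc ‖(PP (n+1) - PP n) * Cq n‖ ≤ ‖PP (n+1) - PP n‖ * ‖Cq n‖ := norm_mul_le _ _
          _ ≤ u * (2 * l ^ n) := mul_le_mul hΔ (claim2 n hnT).2 (norm_nonneg _) hu0
      have hnorm : ‖PP (n+1) * Ee (n+1)‖ ≤ u * fn + fn + u * (c₄ * δ) + u * (2 * l ^ n) := by
        rw [key]
        calc ‖LL (n+1) * ((PP (n+1) - PP n) * (PP n * Ee n)) + LL (n+1) * (PP n * Ee n) +
                LL (n+1) * ((PP (n+1) - PP n) * ((1 - PP n) * Ee n)) +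
                LL (n+1) * ((PP (n+1) - PP n) * Cq n)‖
            ≤ ‖LL (n+1) * ((PP (n+1) - PP n) * (PP n * Ee n)) + LL (n+1) * (PP n * Ee n) +
                LL (n+1) * ((PP (n+1) - PP n) * ((1 - PP n) * Ee n))‖ +
              ‖LL (n+1) * ((PP (n+1) - PP n) * Cq n)‖ := norm_add_le _ _
          _ ≤ ‖LL (n+1) * ((PP (n+1) - PP n) * (PP n * Ee n)) + LL (n+1) * (PP n * Ee n)‖ +
              ‖LL (n+1) * ((PP (n+1) - PP n) * ((1 - PP n) * Ee n))‖ +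
              ‖LL (n+1) * ((PP (n+1) - PP n) * Cq n)‖ := by
              have := norm_add_le
                (LL (n+1) * ((PP (n+1) - PP n) * (PP n * Ee n)) + LL (n+1) * (PP n * Ee n))
                (LL (n+1) * ((PP (n+1) - PP n) * ((1 - PP n) * Ee n)))
              linarith
          _ ≤ u * fn + fn + u * (c₄ * δ) + u * (2 * l ^ n) := by
              have := norm_add_le (LL (n+1) * ((PP (n+1) - PP n) * (PP n * Ee n)))
                (LL (n+1) * (PP n * Ee n))
              linarith
      have hS : ∑ m ∈ Finset.range (n+1), l ^ m = (∑ m ∈ Finset.range n, l ^ m) + l ^ n :=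
        Finset.sum_range_succ _ _
      set s := ∑ m ∈ Finset.range n, l ^ m with hsdef
      have hs0 : 0 ≤ s := Finset.sum_nonneg fun m _ => pow_nonneg hl0 m
      have hw1 : (1:ℝ) ≤ (1 + u) ^ n := one_le_pow₀ (by linarith : (1:ℝ) ≤ 1 + u)
      have hln0 : (0:ℝ) ≤ l ^ n := pow_nonneg hl0 n
      have ha : (1 + u) * fn ≤ (1 + u) * ((1 + u) ^ n * (u * ((n : ℝ) * (c₄ * δ) + 2 * s))) :=
        mul_le_mul_of_nonneg_left hn (by linarith)
      have hb : u * (c₄ * δ) + u * (2 * l ^ n) ≤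
          (1 + u) ^ (n+1) * (u * (c₄ * δ + 2 * l ^ n)) := by
        have h1 : (1:ℝ) ≤ (1 + u) ^ (n+1) := one_le_pow₀ (by linarith : (1:ℝ) ≤ 1 + u)
        have e : (1 + u) ^ (n+1) * (u * (c₄ * δ + 2 * l ^ n)) =
            u * (c₄ * δ) + u * (2 * l ^ n) +
            ((1 + u) ^ (n+1) - 1) * (u * (c₄ * δ + 2 * l ^ n)) := by ring
        have h2 : 0 ≤ ((1 + u) ^ (n+1) - 1) * (u * (c₄ * δ + 2 * l ^ n)) :=
          mul_nonneg (by linarith) (by positivity)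
        linarith
      have hterm : (1 + u) ^ (n+1) * (u * (((n:ℝ)+1) * (c₄ * δ) + 2 * (s + l ^ n))) =
          (1 + u) * ((1 + u) ^ n * (u * ((n : ℝ) * (c₄ * δ) + 2 * s))) +
          (1 + u) ^ (n+1) * (u * (c₄ * δ + 2 * l ^ n)) := by ring
      rw [hS]
      push_cast
      rw [hterm]
      linarith
  -- final assembly
  intro k hk
  refine ⟨?_, (claim2 k hk).2⟩
  have hsplit : Ee k = PP k * Ee k + (1 - PP k) * Ee k := by
    have : Ee k = A k - B k - Cq k := rfl
    noncomm_ring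
  have hEk : ‖Ee k‖ ≤ ‖PP k * Ee k‖ + ‖(1 - PP k) * Ee k‖ :=
    (congrArg (fun x => ‖x‖) hsplit).le.trans (norm_add_le _ _)
  have hku : u * (k:ℝ) ≤ c₁ := by
    rw [hudef]
    have hkT : (k:ℝ) ≤ (T:ℝ) := by exact_mod_cast hk
    calc c₁ / T * (k:ℝ) ≤ c₁ / T * (T:ℝ) :=
          mul_le_mul_of_nonneg_left hkT (by positivity)
      _ = c₁ := by field_simp
  have hδ' : u * (1 - l)⁻¹ = c₁ * δ := by
    rw [hudef, hδdef, mul_inv, div_eq_mul_inv]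
    ring
  have hsum : (∑ m ∈ Finset.range k, l ^ m) ≤ (1 - l)⁻¹ := mygeom_le hl0 hl1 k
  have hf : ‖PP k * Ee k‖ ≤ E₁ * (u * ((k : ℝ) * (c₄ * δ) + 2 * (1 - l)⁻¹)) := by
    refine (claim4 k hk).trans ?_
    have hinner : u * ((k : ℝ) * (c₄ * δ) + 2 * ∑ m ∈ Finset.range k, l ^ m) ≤
        u * ((k : ℝ) * (c₄ * δ) + 2 * (1 - l)⁻¹) := by
      apply mul_le_mul_of_nonneg_left _ hu0
      linarith
    have hpos : 0 ≤ u * ((k : ℝ) * (c₄ * δ) + 2 * ∑ m ∈ Finset.range k, l ^ m) := by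
      have hs0 : (0:ℝ) ≤ ∑ m ∈ Finset.range k, l ^ m :=
        Finset.sum_nonneg fun m _ => pow_nonneg hl0 m
      positivity
    calc (1 + u) ^ k * (u * ((k : ℝ) * (c₄ * δ) + 2 * ∑ m ∈ Finset.range k, l ^ m))
        ≤ E₁ * (u * ((k : ℝ) * (c₄ * δ) + 2 * ∑ m ∈ Finset.range k, l ^ m)) :=
          mul_le_mul_of_nonneg_right (hpowE k hk) hpos
      _ ≤ E₁ * (u * ((k : ℝ) * (c₄ * δ) + 2 * (1 - l)⁻¹)) :=
          mul_le_mul_of_nonneg_left hinner (by linarith)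
  have hf2 : ‖PP k * Ee k‖ ≤ E₁ * (c₁ * (c₄ * δ) + 2 * (c₁ * δ)) := by
    refine hf.trans ?_
    apply mul_le_mul_of_nonneg_left _ (by linarith : (0:ℝ) ≤ E₁)
    have h1 : u * ((k : ℝ) * (c₄ * δ)) ≤ c₁ * (c₄ * δ) := by
      rw [← mul_assoc]
      exact mul_le_mul_of_nonneg_right (by nlinarith) (by positivity)
    have h2 : u * (2 * (1 - l)⁻¹) = 2 * (c₁ * δ) := by
      rw [← hδ']; ring
    calc u * ((k : ℝ) * (c₄ * δ) + 2 * (1 - l)⁻¹)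
        = u * ((k : ℝ) * (c₄ * δ)) + u * (2 * (1 - l)⁻¹) := by ring
      _ ≤ c₁ * (c₄ * δ) + 2 * (c₁ * δ) := by rw [h2]; linarith
  have hg : ‖(1 - PP k) * Ee k‖ ≤ c₄ * δ := claim3 k hk
  have hfinal : ‖Ee k‖ ≤ (E₁ * c₁ * (c₄ + 2) + c₄ + 1) * δ := by
    have : E₁ * (c₁ * (c₄ * δ) + 2 * (c₁ * δ)) + c₄ * δ = (E₁ * c₁ * (c₄ + 2) + c₄) * δ := by
      ring
    nlinarith [hδ0]
  show ‖Ee k‖ ≤ _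
  calc ‖Ee k‖ ≤ (E₁ * c₁ * (c₄ + 2) + c₄ + 1) * δ := hfinal
    _ = (E₁ * c₁ * (c₄ + 2) + c₄ + 1) / ((T : ℝ) * (1 - l)) := by
        rw [hδdef, div_eq_mul_inv]

private lemma exists_pow_near_one {J : Type*} [Fintype J] [Nonempty J] (e : J → ℂ)
    (he : ∀ j, ‖e j‖ = 1) (δ : ℝ) (hδ : 0 < δ) (N : ℕ) :
    ∃ n, N ≤ n ∧ 1 ≤ n ∧ ∀ j, ‖e j ^ n - 1‖ ≤ δ := by
  have hδ' : 0 < δ / (N + 1) := by positivity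
  -- Step A: find d ≥ 1 with all e j ^ d close to 1
  have hA : ∃ d, 1 ≤ d ∧ ∀ j, ‖e j ^ d - 1‖ ≤ δ / (N + 1) := by
    have hmem : ∀ n : ℕ, (fun j => e j ^ n) ∈ Metric.closedBall (0 : J → ℂ) 1 := by
      intro n
      rw [Metric.mem_closedBall, dist_zero_right]
      apply pi_norm_le_iff_of_nonneg zero_le_one |>.mpr
      intro j
      rw [norm_pow, he j, one_pow]
    obtain ⟨x, -, φ, hφ, hconv⟩ :=
      (isCompact_closedBall (0 : J → ℂ) 1).tendsto_subseq hmem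
    rw [Metric.tendsto_atTop] at hconv
    obtain ⟨M, hM⟩ := hconv (δ / (N + 1) / 2) (by positivity)
    have h1 := hM M le_rfl
    have h2 := hM (M + 1) (Nat.le_succ M)
    simp only [Function.comp_apply] at h1 h2
    have hdist : dist (fun j => e j ^ φ (M + 1)) (fun j => e j ^ φ M) < δ / (N + 1) := by
      calc dist (fun j => e j ^ φ (M + 1)) (fun j => e j ^ φ M)
          ≤ dist (fun j => e j ^ φ (M + 1)) x + dist (fun j => e j ^ φ M) x :=
            dist_triangle_right _ _ _
        _ < δ / (N + 1) := by linarith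
    have hφlt : φ M < φ (M + 1) := hφ (Nat.lt_succ_self M)
    refine ⟨φ (M + 1) - φ M, by omega, ?_⟩
    intro j
    have hj0 := dist_le_pi_dist (fun j => e j ^ φ (M + 1)) (fun j => e j ^ φ M) j
    have hj : dist (e j ^ φ (M + 1)) (e j ^ φ M) < δ / (N + 1) :=
      lt_of_le_of_lt hj0 hdist
    rw [dist_eq_norm] at hj
    have hsplit : e j ^ φ (M + 1) - e j ^ φ M =
        e j ^ φ M * (e j ^ (φ (M + 1) - φ M) - 1) := by
      rw [mul_sub, mul_one, ← pow_add, Nat.add_sub_cancel' hφlt.le]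
    rw [hsplit, norm_mul, norm_pow, he j, one_pow, one_mul] at hj
    exact hj.le
  obtain ⟨d, hd1, hdclose⟩ := hA
  -- Step B: powers of d
  have hB : ∀ (j : J) (r : ℕ), ‖e j ^ (d * r) - 1‖ ≤ r * ‖e j ^ d - 1‖ := by
    intro j r
    induction r with
    | zero => simp
    | succ r ih =>
      have hsplit : e j ^ (d * (r + 1)) - 1 =
          e j ^ (d * r) * (e j ^ d - 1) + (e j ^ (d * r) - 1) := by
        rw [Nat.mul_succ, pow_add]; ring
      calc ‖e j ^ (d * (r + 1)) - 1‖
          ≤ ‖e j ^ (d * r) * (e j ^ d - 1)‖ + ‖e j ^ (d * r) - 1‖ := by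
            rw [hsplit]; exact norm_add_le _ _
        _ ≤ 1 * ‖e j ^ d - 1‖ + r * ‖e j ^ d - 1‖ := by
            rw [norm_mul, norm_pow, he j, one_pow]
            exact add_le_add le_rfl ih
        _ = (r + 1 : ℕ) * ‖e j ^ d - 1‖ := by push_cast; ring
  refine ⟨d * (N + 1), ?_, ?_, ?_⟩
  · calc N ≤ N + 1 := Nat.le_succ N
      _ = 1 * (N + 1) := (one_mul _).symm
      _ ≤ d * (N + 1) := Nat.mul_le_mul_right _ hd1
  · exact le_trans hd1 (Nat.le_mul_of_pos_right d (Nat.succ_pos N))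
  · intro j
    calc ‖e j ^ (d * (N + 1)) - 1‖ ≤ (N + 1 : ℕ) * ‖e j ^ d - 1‖ := hB j (N + 1)
      _ ≤ (N + 1 : ℕ) * (δ / (N + 1)) := by
          apply mul_le_mul_of_nonneg_left (hdclose j) (by positivity)
      _ = δ := by push_cast; field_simp

section SpecAux
variable {X : Type*} [NormedAddCommGroup X] [NormedSpace ℂ X]
variable {J : Type*} [Fintype J] [Nonempty J]
variable (L : X →L[ℂ] X) (e : J → ℂ) (P : J → (X →L[ℂ] X))

set_option linter.unusedSectionVars false in
private lemma spec_pow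
    (hcomm : ∀ j, L * P j = P j * L)
    (heig : ∀ j, L * P j = e j • P j)
    (hdisj : ∀ i j, i ≠ j → P i * P j = 0)
    (hidem : ∀ j, P j * P j = P j) :
    ∀ n, 1 ≤ n → L ^ n = (∑ j, (e j) ^ n • P j) + (L * (1 - ∑ j, P j)) ^ n := by
  have hsumP : ∀ j, (∑ i, P i) * P j = P j := by
    intro j
    rw [Finset.sum_mul]
    rw [Finset.sum_eq_single j (fun i _ hij => hdisj i j hij) (by simp)]
    exact hidem j
  have hPL : ∀ j, P j * L = e j • P j := fun j => (hcomm j).symm.trans (heig j)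
  have hbase : L = (∑ j, (e j) • P j) + L * (1 - ∑ j, P j) := by
    rw [mul_sub, mul_one, Finset.mul_sum]
    simp only [heig]
    abel
  have hZP : ∀ j, (L * (1 - ∑ i, P i)) * P j = 0 := by
    intro j
    rw [mul_assoc, sub_mul, one_mul, hsumP, sub_self, mul_zero]
  intro n hn
  induction n with
  | zero => omega
  | succ n ih =>
    rcases Nat.eq_or_lt_of_le hn with h1 | h2
    · rw [← h1]
      simpa only [pow_one] using hbase
    · have hn1 : 1 ≤ n := by omega
      have ihn := ih hn1
      obtain ⟨m, hm⟩ : ∃ m, n = m + 1 := ⟨n - 1, by omega⟩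
      have hZnP : ∀ j, (L * (1 - ∑ i, P i)) ^ n * P j = 0 := by
        intro j
        rw [hm, pow_succ, mul_assoc, hZP j, mul_zero]
      rw [pow_succ, ihn, add_mul]
      have t1 : (∑ j, (e j) ^ n • P j) * L = ∑ j, (e j) ^ (n + 1) • P j := by
        rw [Finset.sum_mul]
        congr 1
        ext j
        rw [smul_mul_assoc, hPL, smul_smul, ← pow_succ]
      have t2 : (L * (1 - ∑ i, P i)) ^ n * L =
          (L * (1 - ∑ i, P i)) ^ (n + 1) := by
        nth_rewrite 2 [hbase]
        rw [mul_add, Finset.mul_sum]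
        have : ∀ j, (L * (1 - ∑ i, P i)) ^ n * (e j • P j) = 0 := by
          intro j
          rw [mul_smul_comm, hZnP, smul_zero]
        simp only [this, Finset.sum_const_zero, zero_add, ← pow_succ]
      rw [t1, t2]

set_option maxHeartbeats 1000000 in
private lemma perip_norm_le_one [Nontrivial X]
    (hL : ‖L‖ ≤ 1) (he : ∀ j, ‖e j‖ = 1)
    (hcomm : ∀ j, L * P j = P j * L)
    (heig : ∀ j, L * P j = e j • P j)
    (hdisj : ∀ i j, i ≠ j → P i * P j = 0)
    (hidem : ∀ j, P j * P j = P j)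
    {l : ℝ} (hl0 : 0 ≤ l) (hl1 : l < 1)
    (hQ : ‖L * (1 - ∑ j, P j)‖ ≤ l) :
    ‖∑ j, P j‖ ≤ 1 := by
  apply le_of_forall_pos_le_add
  intro η hη
  set K : ℝ := ∑ j, ‖P j‖ with hKdef
  have hK0 : 0 ≤ K := Finset.sum_nonneg fun j _ => norm_nonneg _
  have hδ : 0 < η / (2 * (K + 1)) := by positivity
  obtain ⟨n₀, hn₀⟩ := exists_pow_lt_of_lt_one (half_pos hη) hl1
  obtain ⟨n, hnN, hn1, hclose⟩ := exists_pow_near_one e he _ hδ n₀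
  have hid := spec_pow L e P hcomm heig hdisj hidem n hn1
  have key : (∑ j, P j) = L ^ n - (L * (1 - ∑ j, P j)) ^ n -
      ∑ j, ((e j) ^ n - 1) • P j := by
    have : ∑ j, (e j) ^ n • P j = (∑ j, ((e j) ^ n - 1) • P j) + ∑ j, P j := by
      rw [← Finset.sum_add_distrib]
      congr 1
      ext j
      rw [sub_smul, one_smul, sub_add_cancel]
    rw [hid, this]
    abel
  have h1 : ‖L ^ n‖ ≤ 1 := by
    calc ‖L ^ n‖ ≤ ‖L‖ ^ n := norm_pow_le' L (by omega)
      _ ≤ 1 := pow_le_one₀ (norm_nonneg _) hL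
  have h2 : ‖(L * (1 - ∑ j, P j)) ^ n‖ ≤ η / 2 := by
    calc ‖(L * (1 - ∑ j, P j)) ^ n‖ ≤ ‖L * (1 - ∑ j, P j)‖ ^ n := norm_pow_le' _ (by omega)
      _ ≤ l ^ n := pow_le_pow_left₀ (norm_nonneg _) hQ n
      _ ≤ l ^ n₀ := pow_le_pow_of_le_one hl0 hl1.le hnN
      _ ≤ η / 2 := hn₀.le
  have h3 : ‖∑ j, ((e j) ^ n - 1) • P j‖ ≤ η / 2 := by
    calc ‖∑ j, ((e j) ^ n - 1) • P j‖ ≤ ∑ j, ‖((e j) ^ n - 1) • P j‖ :=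
          norm_sum_le _ _
      _ ≤ ∑ j, (η / (2 * (K + 1))) * ‖P j‖ := by
          apply Finset.sum_le_sum
          intro j _
          have hsm := norm_smul_le ((e j) ^ n - 1) (P j)
          exact le_trans hsm (mul_le_mul_of_nonneg_right (hclose j) (norm_nonneg _))
      _ = (η / (2 * (K + 1))) * K := by rw [← Finset.mul_sum]
      _ ≤ η / 2 := by
          rw [div_mul_eq_mul_div, div_le_div_iff₀ (by positivity) (by norm_num)]
          nlinarith
  calc ‖∑ j, P j‖ ≤ ‖L ^ n - (L * (1 - ∑ j, P j)) ^ n‖ + ‖∑ j, ((e j) ^ n - 1) • P j‖ :=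
        (congrArg (fun x => ‖x‖) key).le.trans (norm_sub_le _ _)
    _ ≤ ‖L ^ n‖ + ‖(L * (1 - ∑ j, P j)) ^ n‖ + ‖∑ j, ((e j) ^ n - 1) • P j‖ :=
        add_le_add_left (norm_sub_le _ _) _
    _ ≤ 1 + η / 2 + η / 2 := by linarith
    _ = 1 + η := by ring
end SpecAux

private lemma sumP_lipschitz {X : Type*} [NormedAddCommGroup X] [NormedSpace ℂ X]
    {J : Type*} [Fintype J] (P : J → ℝ → (X →L[ℂ] X)) (cP : ℝ)
    (hPC2 : ∀ j, ContDiffOn ℝ 2 (fun s => P j s) (Set.Icc (0:ℝ) 1))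
    (hd : ∀ j, ∀ s ∈ Set.Icc (0:ℝ) 1,
      ‖iteratedDerivWithin 1 (fun s => P j s) (Set.Icc (0:ℝ) 1) s‖ ≤ cP)
    {s t : ℝ} (hs : s ∈ Set.Icc (0:ℝ) 1) (ht : t ∈ Set.Icc (0:ℝ) 1) :
    ‖(∑ j, P j s) - ∑ j, P j t‖ ≤ ((Fintype.card J : ℝ) * cP) * |s - t| := by
  have hj : ∀ j : J, ‖P j s - P j t‖ ≤ cP * |s - t| := by
    intro j
    have hdiff : DifferentiableOn ℝ (fun s => P j s) (Set.Icc (0:ℝ) 1) :=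
      (hPC2 j).differentiableOn two_ne_zero
    have hbound : ∀ x ∈ Set.Icc (0:ℝ) 1, ‖derivWithin (fun s => P j s) (Set.Icc (0:ℝ) 1) x‖ ≤ cP := by
      intro x hx
      rw [← iteratedDerivWithin_one]
      exact hd j x hx
    have := Convex.norm_image_sub_le_of_norm_derivWithin_le hdiff hbound
      (convex_Icc (0:ℝ) 1) ht hs
    rwa [Real.norm_eq_abs] at this
  calc ‖(∑ j, P j s) - ∑ j, P j t‖ = ‖∑ j, (P j s - P j t)‖ := by
        rw [Finset.sum_sub_distrib]
    _ ≤ ∑ j : J, ‖P j s - P j t‖ := norm_sum_le _ _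
    _ ≤ ∑ _j : J, cP * |s - t| := Finset.sum_le_sum fun j _ => hj j
    _ = ((Fintype.card J : ℝ) * cP) * |s - t| := by
        rw [Finset.sum_const, Finset.card_univ, nsmul_eq_mul]
        ring

/-- **Elimination of the strictly contracting part** (Proposition 4.6): under H1–H4 there
is a constant `C^P` (depending only on `c^P`) such that for any `T ≥ 1` and `k ≤ T`,
`‖L_{k,T} ⋯ L_{1,T} - L^P_{k,T} ⋯ L^P_{1,T} P₀ - L^Q_{k,T} ⋯ L^Q_{1,T} Q₀‖ ≤ C^P/(T(1-ℓ))`,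
and `‖L^Q_{k,T} ⋯ L^Q_{1,T} Q₀‖ ≤ 2 ℓ^k`. -/
theorem contracting_part_elimination
    {X : Type*} [NormedAddCommGroup X] [NormedSpace ℂ X] [FiniteDimensional ℂ X]
    [Nontrivial X]
    (L : ℝ → (X →L[ℂ] X))
    {J : Type*} [Fintype J] [Nonempty J]
    (e : J → ℝ → ℂ) (P : J → ℝ → (X →L[ℂ] X)) (ε ℓ cP : ℝ)
    -- H1
    (hH1 : ∀ s ∈ Set.Icc (0:ℝ) 1, ‖L s‖ ≤ 1)
    -- H2
    (hε : 0 < ε)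
    (he_unit : ∀ j, ∀ s ∈ Set.Icc (0:ℝ) 1, ‖e j s‖ = 1)
    (hgap : ∀ s ∈ Set.Icc (0:ℝ) 1, ∀ i j, i ≠ j → 2 * ε < ‖e i s - e j s‖)
    (hP_idem : ∀ j, ∀ s ∈ Set.Icc (0:ℝ) 1, P j s * P j s = P j s)
    (hP_comm : ∀ j, ∀ s ∈ Set.Icc (0:ℝ) 1, L s * P j s = P j s * L s)
    (hP_eig : ∀ j, ∀ s ∈ Set.Icc (0:ℝ) 1, L s * P j s = e j s • P j s)
    (hP_disj : ∀ i j, i ≠ j → ∀ s ∈ Set.Icc (0:ℝ) 1, P i s * P j s = 0)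
    (hP_rank : ∀ j, ∀ s ∈ Set.Icc (0:ℝ) 1,
      Module.finrank ℂ (LinearMap.range ((P j s : X →ₗ[ℂ] X))) = 1)
    -- H3
    (hH3 : ContDiffOn ℝ 2 (fun s => L s * ∑ j, P j s) (Set.Icc (0:ℝ) 1))
    -- H4
    (hℓ : ℓ < 1)
    (hH4 : ∀ s ∈ Set.Icc (0:ℝ) 1, ‖L s * (1 - ∑ j, P j s)‖ ≤ ℓ)
    -- the peripheral data is C², with derivatives bounded by `c^P`
    (heC2 : ∀ j, ContDiffOn ℝ 2 (e j) (Set.Icc (0:ℝ) 1))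
    (hPC2 : ∀ j, ContDiffOn ℝ 2 (fun s => P j s) (Set.Icc (0:ℝ) 1))
    (hcP : ∀ j, ∀ s ∈ Set.Icc (0:ℝ) 1, ∀ α ∈ ({1, 2} : Set ℕ),
      ‖iteratedDerivWithin α (fun s => P j s) (Set.Icc (0:ℝ) 1) s‖ ≤ cP ∧
      ‖iteratedDerivWithin α (e j) (Set.Icc (0:ℝ) 1) s‖ ≤ cP) :
    ∃ CP : ℝ, 0 < CP ∧
      ∀ T : ℕ, 1 ≤ T → ∀ k : ℕ, k ≤ T →
        ‖opProd (fun i => L ((i : ℝ) / (T : ℝ))) k -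
            opProd (fun i => L ((i : ℝ) / (T : ℝ)) * ∑ j, P j ((i : ℝ) / (T : ℝ))) k *
              (∑ j, P j 0) -
            opProd (fun i => L ((i : ℝ) / (T : ℝ)) * (1 - ∑ j, P j ((i : ℝ) / (T : ℝ)))) k *
              (1 - ∑ j, P j 0)‖ ≤ CP / ((T : ℝ) * (1 - ℓ)) ∧
        ‖opProd (fun i => L ((i : ℝ) / (T : ℝ)) * (1 - ∑ j, P j ((i : ℝ) / (T : ℝ)))) k *
            (1 - ∑ j, P j 0)‖ ≤ 2 * ℓ ^ k := by
  classical
  have h0mem : (0:ℝ) ∈ Set.Icc (0:ℝ) 1 := ⟨le_refl 0, zero_le_one⟩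
  have hcP0 : 0 ≤ cP := by
    have := (hcP (Classical.arbitrary J) 0 h0mem 1 (by norm_num)).2
    exact le_trans (norm_nonneg _) this
  have hℓ0 : 0 ≤ ℓ := le_trans (norm_nonneg _) (hH4 0 h0mem)
  set c₁ : ℝ := (Fintype.card J : ℝ) * cP with hc₁def
  have hc₁0 : 0 ≤ c₁ := by positivity
  refine ⟨Real.exp c₁ * c₁ * (c₁ * (3 + 2 * Real.exp c₁) + 2) + c₁ * (3 + 2 * Real.exp c₁) + 1,
    ?_, ?_⟩
  · have e0 : (0:ℝ) ≤ Real.exp c₁ := (Real.exp_pos _).le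
    have t1 : (0:ℝ) ≤ c₁ * (3 + 2 * Real.exp c₁) := mul_nonneg hc₁0 (by linarith)
    have t2 : (0:ℝ) ≤ Real.exp c₁ * c₁ * (c₁ * (3 + 2 * Real.exp c₁) + 2) :=
      mul_nonneg (mul_nonneg e0 hc₁0) (by linarith)
    linarith
  intro T hT k hk
  have hT0 : (0:ℝ) < T := by exact_mod_cast Nat.lt_of_lt_of_le Nat.zero_lt_one hT
  have hmem : ∀ i : ℕ, i ≤ T → ((i:ℝ)/(T:ℝ)) ∈ Set.Icc (0:ℝ) 1 := by
    intro i hi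
    constructor
    · positivity
    · rw [div_le_one hT0]; exact_mod_cast hi
  have hPid : ∀ s ∈ Set.Icc (0:ℝ) 1, (∑ j, P j s) * (∑ j, P j s) = ∑ j, P j s := by
    intro s hs
    rw [Finset.sum_mul_sum]
    apply Finset.sum_congr rfl
    intro i _
    rw [Finset.sum_eq_single i (fun j _ hji => hP_disj i j (Ne.symm hji) s hs) (by simp)]
    exact hP_idem i s hs
  have hPcomm : ∀ s ∈ Set.Icc (0:ℝ) 1, L s * (∑ j, P j s) = (∑ j, P j s) * L s := by
    intro s hs
    rw [Finset.mul_sum, Finset.sum_mul]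
    exact Finset.sum_congr rfl fun j _ => hP_comm j s hs
  have hPnorm : ∀ s ∈ Set.Icc (0:ℝ) 1, ‖∑ j, P j s‖ ≤ 1 := by
    intro s hs
    exact perip_norm_le_one (L s) (fun j => e j s) (fun j => P j s)
      (hH1 s hs) (fun j => he_unit j s hs) (fun j => hP_comm j s hs)
      (fun j => hP_eig j s hs) (fun i j hij => hP_disj i j hij s hs)
      (fun j => hP_idem j s hs) hℓ0 hℓ (hH4 s hs)
  have hd : ∀ j, ∀ s ∈ Set.Icc (0:ℝ) 1,
      ‖iteratedDerivWithin 1 (fun s => P j s) (Set.Icc (0:ℝ) 1) s‖ ≤ cP :=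
    fun j s hs => (hcP j s hs 1 (by norm_num)).1
  have hLip : ∀ i : ℕ, i + 1 ≤ T →
      ‖(∑ j, P j (((i+1:ℕ):ℝ)/(T:ℝ))) - ∑ j, P j (((i:ℕ):ℝ)/(T:ℝ))‖ ≤ c₁ / T := by
    intro i hi
    have h1 := sumP_lipschitz P cP hPC2 hd (hmem (i+1) hi) (hmem i (Nat.le_of_succ_le hi))
    have habs : |((i+1:ℕ):ℝ)/(T:ℝ) - ((i:ℕ):ℝ)/(T:ℝ)| = 1 / T := by
      push_cast
      have he : ((i:ℝ)+1)/(T:ℝ) - (i:ℝ)/(T:ℝ) = 1/(T:ℝ) := by ring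
      rw [he, abs_of_nonneg (by positivity)]
    rw [habs] at h1
    calc ‖(∑ j, P j (((i+1:ℕ):ℝ)/(T:ℝ))) - ∑ j, P j (((i:ℕ):ℝ)/(T:ℝ))‖
        ≤ c₁ * (1 / T) := h1
      _ = c₁ / T := mul_one_div _ _
  have key := abstract_elim (fun i : ℕ => L ((i:ℝ)/(T:ℝ)))
    (fun i : ℕ => ∑ j, P j ((i:ℝ)/(T:ℝ))) T hT ℓ c₁ hℓ0 hℓ hc₁0
    (fun i hi => hH1 _ (hmem i hi))
    (fun i hi => hPid _ (hmem i hi))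
    (fun i hi => hPcomm _ (hmem i hi))
    (fun i hi => hPnorm _ (hmem i hi))
    (fun i hi => hH4 _ (hmem i hi))
    hLip k hk
  obtain ⟨h1, h2⟩ := key
  simp only [Nat.cast_zero, zero_div] at h1 h2
  exact ⟨h1, h2⟩

end RISPaper
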